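/- arXiv:2109.15124 — 3 statements merged into one kernel-verified Lean document; each statement's English description precedes it below -/
import Mathlib

section
/- Let A be a unital *-algebra, H a Hilbert space, and φ : A^{2m−1} → B(H) a symmetric k-linear map (k = 2m−1) such that for all n and all a_{p,j} ∈ A, g_j ∈ H, the matrix sum Σ_{i,j} ⟨φ(a_{m,i}*,…,a_{2,i}*, a_{1,i}* a_{1,j}, a_{2,j},…,a_{m,j}) g_j, g_i⟩ ≥ 0 (complete positivity on symmetric tuples). Suppose additionally φ is invariant: φ(a₁c₁,…,a_{m−1}c_{m−1}, a_m, a_{m+1},…,a_{2m−1}) = φ(a₁,…,a_{m−1}, a_m, c_{m−1}a_{m+1},…, c₁ a_{2m−1}). Then for each 1 ≤ p ≤ m and each a ∈ A, the left-multiplication operator π_p(a)(a₁⊗…⊗a_p⊗…⊗a_m⊗g + N) = a₁⊗…⊗a a_p⊗…⊗a_m⊗g + N is well defined on the quotient (A^{⊗m}⊗H)/N, where N is the null space of the induced semi-inner product. -/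
open scoped ComplexOrder

variable {A : Type*} [Ring A] [StarRing A] [Algebra ℂ A] [StarModule ℂ A]
variable {H : Type*} [NormedAddCommGroup H] [InnerProductSpace ℂ H] [CompleteSpace H]
variable {r : ℕ}

/-- The canonical semi-inner product of elementary tensors `a₁⊗…⊗a_m⊗g` and `b₁⊗…⊗b_m⊗h`
(`m = r+1`, odd case `k = 2m−1 = 2r+1`) associated to a `k`-linear map `φ`, namely
`⟨φ(b_m*,…,b₂*, b₁*a₁, a₂,…,a_m)g, h⟩`.  A `(2r+1)`-linear map `A^{2r+1} → B(H)` is encoded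
in uncurried form `φ : (Fin r → A) → A → (Fin r → A) → (H →L[ℂ] H)`, the middle argument
being the `m`-th variable.  (The paper's inner product `⟨u, v⟩` is linear in `u`; Mathlib's
`inner u v` is linear in `v`, so the paper's `⟨u, v⟩` is `inner v u` here.) -/
noncomputable def gram (φ : (Fin r → A) → A → (Fin r → A) → (H →L[ℂ] H))
    (a : Fin (r + 1) → A) (g : H) (b : Fin (r + 1) → A) (h : H) : ℂ :=
  inner ℂ h ((φ (fun i => star (b i.rev.succ)) (star (b 0) * a 0) (fun i => a i.succ)) g)

/-- `φ` is `(2r+1)`-linear: complex-linear in each of its `2r+1` variables. -/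
def IsMultilinearOdd (φ : (Fin r → A) → A → (Fin r → A) → (H →L[ℂ] H)) : Prop :=
  (∀ x z, IsLinearMap ℂ fun y => φ x y z) ∧
  (∀ x y z (i : Fin r), IsLinearMap ℂ fun u => φ (Function.update x i u) y z) ∧
  (∀ x y z (i : Fin r), IsLinearMap ℂ fun u => φ x y (Function.update z i u))

/-- `φ` is symmetric: `φ(a₁,…,a_k)* = φ(a_k*,…,a₁*)`. -/
def IsSymmMapOdd (φ : (Fin r → A) → A → (Fin r → A) → (H →L[ℂ] H)) : Prop :=
  ∀ x y z, star (φ x y z) = φ (fun i => star (z i.rev)) (star y) (fun i => star (x i.rev))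

/-- `φ` is invariant:
`φ(a₁c₁,…,a_{m−1}c_{m−1}, a_m, a_{m+1},…,a_{2m−1}) = φ(a₁,…,a_m, c_{m−1}a_{m+1},…,c₁a_{2m−1})`. -/
def IsInvariantOdd (φ : (Fin r → A) → A → (Fin r → A) → (H →L[ℂ] H)) : Prop :=
  ∀ (x c : Fin r → A) (y : A) (z : Fin r → A),
    φ (fun i => x i * c i) y z = φ x y (fun i => c i.rev * z i)

/-- `φ` is completely positive: the canonical sesquilinear form on `A^{⊗m} ⊗ H` is positive
semi-definite, i.e. all Gram sums over finite families of elementary tensors are `≥ 0`. -/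
def IsCPOdd (φ : (Fin r → A) → A → (Fin r → A) → (H →L[ℂ] H)) : Prop :=
  ∀ (n : ℕ) (a : Fin n → Fin (r + 1) → A) (g : Fin n → H),
    0 ≤ ∑ j, ∑ i, gram φ (a j) (g j) (a i) (g i)

/-- The action of `π_p(a)`: multiply the `p`-th tensor slot on the left by `a`. -/
def mulSlot (p : Fin (r + 1)) (a : A) (c : Fin (r + 1) → A) : Fin (r + 1) → A :=
  Function.update c p (a * c p)

set_option linter.unusedSectionVars false

lemma gram_conj (φ : (Fin r → A) → A → (Fin r → A) → (H →L[ℂ] H))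
    (hsymm : IsSymmMapOdd φ) (a : Fin (r + 1) → A) (g : H) (b : Fin (r + 1) → A) (h : H) :
    gram φ b h a g = starRingEnd ℂ (gram φ a g b h) := by
  unfold gram
  have h1 := hsymm (fun i => star (b i.rev.succ)) (star (b 0) * a 0) (fun i => a i.succ)
  simp only [star_star, star_mul, Fin.rev_rev] at h1
  rw [← h1, ContinuousLinearMap.star_eq_adjoint, ContinuousLinearMap.adjoint_inner_right,
    ← inner_conj_symm]

lemma gram_smul_left (φ : (Fin r → A) → A → (Fin r → A) → (H →L[ℂ] H))
    (a : Fin (r + 1) → A) (g : H) (b : Fin (r + 1) → A) (h : H) (t : ℂ) :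
    gram φ a (t • g) b h = t * gram φ a g b h := by
  unfold gram; rw [map_smul, inner_smul_right]

lemma gram_smul_right (φ : (Fin r → A) → A → (Fin r → A) → (H →L[ℂ] H))
    (a : Fin (r + 1) → A) (g : H) (b : Fin (r + 1) → A) (h : H) (t : ℂ) :
    gram φ a g b (t • h) = starRingEnd ℂ t * gram φ a g b h := by
  unfold gram; rw [inner_smul_left]

lemma gram_adjoint (φ : (Fin r → A) → A → (Fin r → A) → (H →L[ℂ] H))
    (hinv : IsInvariantOdd φ) (p : Fin (r + 1)) (a' : A)
    (c : Fin (r + 1) → A) (g : H) (d : Fin (r + 1) → A) (h : H) :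
    gram φ (mulSlot p a' c) g d h = gram φ c g (mulSlot p (star a') d) h := by
  unfold gram mulSlot
  induction p using Fin.cases with
  | zero =>
    simp only [Function.update_self]
    have e1 : ∀ i : Fin r, Function.update c 0 (a' * c 0) i.succ = c i.succ := fun i =>
      Function.update_of_ne (Fin.succ_ne_zero i) _ _
    have e2 : ∀ i : Fin r, Function.update d 0 (star a' * d 0) i.rev.succ = d i.rev.succ :=
      fun i => Function.update_of_ne (Fin.succ_ne_zero _) _ _
    simp only [e1, e2, star_mul, star_star, mul_assoc]
  | succ q =>
    have e0c : Function.update c q.succ (a' * c q.succ) 0 = c 0 :=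
      Function.update_of_ne (Fin.succ_ne_zero q).symm _ _
    have e0d : Function.update d q.succ (star a' * d q.succ) 0 = d 0 :=
      Function.update_of_ne (Fin.succ_ne_zero q).symm _ _
    rw [e0c, e0d]
    set X : Fin r → A := fun i => star (d i.rev.succ) with hX
    set Y : A := star (d 0) * c 0 with hY
    set Z : Fin r → A := fun i => c i.succ with hZ
    have eZ : (fun i : Fin r => Function.update c q.succ (a' * c q.succ) i.succ)
        = Function.update Z q (a' * Z q) := by
      funext i
      by_cases hiq : i = q
      · subst hiq; simp [hZ]
      · rw [Function.update_of_ne (fun hh => hiq (Fin.succ_injective _ hh)),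
          Function.update_of_ne hiq]
    have eX : (fun i : Fin r => star (Function.update d q.succ (star a' * d q.succ) i.rev.succ))
        = Function.update X q.rev (X q.rev * a') := by
      funext i
      by_cases hiq : i = q.rev
      · subst hiq
        rw [Fin.rev_rev, Function.update_self, star_mul, star_star]
        simp [hX, Fin.rev_rev]
      · have : i.rev ≠ q := fun hh => hiq (by rw [← hh, Fin.rev_rev])
        rw [Function.update_of_ne (fun hh => this (Fin.succ_injective _ hh)),
          Function.update_of_ne hiq]
    rw [eZ, eX]
    set cv : Fin r → A := Function.update (fun _ => (1 : A)) q.rev a' with hcv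
    have h1 : (fun i => X i * cv i) = Function.update X q.rev (X q.rev * a') := by
      funext i
      by_cases hiq : i = q.rev
      · subst hiq; simp [hcv]
      · rw [Function.update_of_ne hiq]
        simp [hcv, Function.update_of_ne hiq]
    have h2 : (fun i => cv i.rev * Z i) = Function.update Z q (a' * Z q) := by
      funext i
      by_cases hiq : i = q
      · subst hiq; simp [hcv, Fin.rev_rev]
      · have : i.rev ≠ q.rev := fun hh => hiq (by
          have := congrArg Fin.rev hh; rwa [Fin.rev_rev, Fin.rev_rev] at this)
        rw [Function.update_of_ne hiq]
        simp [hcv, Function.update_of_ne this]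
    have := hinv X cv Y Z
    rw [h1, h2] at this
    rw [← this]


/-- For a symmetric invariant completely positive `(2m−1)`-linear map `φ`, the left
multiplication operators `π_p(a)` are well defined on the quotient `(A^{⊗m}⊗H)/N`: they map
the null space `N` of the induced semi-inner product into itself.  Here a vector of
`A^{⊗m}⊗H` is the finite sum `Σⱼ c_{1,j}⊗…⊗c_{m,j}⊗gⱼ`, its squared seminorm is the Gram
sum, and `π_p(a)` multiplies the `p`-th slot by `a`. -/
theorem stmt5 (φ : (Fin r → A) → A → (Fin r → A) → (H →L[ℂ] H))
    (hlin : IsMultilinearOdd φ) (hsymm : IsSymmMapOdd φ)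
    (hinv : IsInvariantOdd φ) (hcp : IsCPOdd φ)
    (p : Fin (r + 1)) (a : A) {n : ℕ}
    (c : Fin n → Fin (r + 1) → A) (g : Fin n → H)
    (hnull : ∑ j, ∑ i, gram φ (c j) (g j) (c i) (g i) = 0) :
    ∑ j, ∑ i, gram φ (mulSlot p a (c j)) (g j) (mulSlot p a (c i)) (g i) = 0 := by
  classical
  set dd : Fin n → Fin (r + 1) → A := fun j => mulSlot p (star a) (mulSlot p a (c j)) with hdd
  set z : ℂ := ∑ j, ∑ i, gram φ (c j) (g j) (dd i) (g i) with hz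
  have key : ∀ j i, gram φ (mulSlot p a (c j)) (g j) (mulSlot p a (c i)) (g i)
      = gram φ (c j) (g j) (dd i) (g i) := fun j i =>
    gram_adjoint φ hinv p a (c j) (g j) (mulSlot p a (c i)) (g i)
  suffices hz0 : z = 0 by
    rw [hz] at hz0
    calc ∑ j, ∑ i, gram φ (mulSlot p a (c j)) (g j) (mulSlot p a (c i)) (g i)
        = ∑ j, ∑ i, gram φ (c j) (g j) (dd i) (g i) := by
          exact Finset.sum_congr rfl fun j _ => Finset.sum_congr rfl fun i _ => key j i
      _ = 0 := hz0
  set β : ℂ := ∑ j, ∑ i, gram φ (dd j) (g j) (dd i) (g i) with hβ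
  have hβ0 : 0 ≤ β := hcp n dd g
  have hconj : starRingEnd ℂ z = ∑ j, ∑ i, gram φ (dd j) (g j) (c i) (g i) := by
    rw [hz, map_sum]
    rw [Finset.sum_comm]
    refine Finset.sum_congr rfl fun i _ => ?_
    rw [map_sum]
    exact Finset.sum_congr rfl fun j _ => (gram_conj φ hsymm (c i) (g i) (dd j) (g j)).symm
  have hQ : ∀ t : ℂ, 0 ≤ starRingEnd ℂ t * z + t * starRingEnd ℂ z + t * starRingEnd ℂ t * β := by
    intro t
    have h0 := hcp (n + n) (Fin.addCases c dd) (Fin.addCases g fun j => t • g j)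
    simp only [Fin.sum_univ_add, Fin.addCases_left, Fin.addCases_right] at h0
    rw [Finset.sum_add_distrib, Finset.sum_add_distrib] at h0
    have e1 : ∑ j, ∑ i, gram φ (c j) (g j) (dd i) (t • g i) = starRingEnd ℂ t * z := by
      rw [hz, Finset.mul_sum]
      refine Finset.sum_congr rfl fun j _ => ?_
      rw [Finset.mul_sum]
      exact Finset.sum_congr rfl fun i _ => gram_smul_right φ _ _ _ _ t
    have e2 : ∑ j, ∑ i, gram φ (dd j) (t • g j) (c i) (g i) = t * starRingEnd ℂ z := by
      rw [hconj, Finset.mul_sum]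
      refine Finset.sum_congr rfl fun j _ => ?_
      rw [Finset.mul_sum]
      exact Finset.sum_congr rfl fun i _ => gram_smul_left φ _ _ _ _ t
    have e3 : ∑ j, ∑ i, gram φ (dd j) (t • g j) (dd i) (t • g i) = t * starRingEnd ℂ t * β := by
      rw [hβ, Finset.mul_sum]
      refine Finset.sum_congr rfl fun j _ => ?_
      rw [Finset.mul_sum]
      refine Finset.sum_congr rfl fun i _ => ?_
      rw [gram_smul_left, gram_smul_right]; ring
    rw [e1, e2, e3, hnull, zero_add] at h0
    convert h0 using 1
    ring
  -- β is a nonnegative real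
  rw [Complex.le_def] at hβ0
  set b : ℝ := β.re with hb
  have hbe : β = (b : ℂ) := Complex.ext rfl hβ0.2.symm
  have hb0 : 0 ≤ b := by simpa using hβ0.1
  by_contra hne
  have hN : 0 < Complex.normSq z := Complex.normSq_pos.mpr hne
  set ε : ℝ := 1 / (b + 1) with hε
  have hε0 : 0 < ε := by positivity
  have hεb : ε * b < 1 := by
    rw [hε, one_div, inv_mul_eq_div, div_lt_one (by linarith)]
    linarith
  have h1 := hQ (-(ε : ℂ) * z)
  have hexp : starRingEnd ℂ (-(ε : ℂ) * z) * z + (-(ε : ℂ) * z) * starRingEnd ℂ z +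
      (-(ε : ℂ) * z) * starRingEnd ℂ (-(ε : ℂ) * z) * β
      = ((Complex.normSq z * (ε * ε * b - 2 * ε) : ℝ) : ℂ) := by
    rw [hbe, map_mul, map_neg, Complex.conj_ofReal]
    have hm : z * starRingEnd ℂ z = (Complex.normSq z : ℂ) := Complex.mul_conj z
    have step : -(ε : ℂ) * starRingEnd ℂ z * z + -(ε : ℂ) * z * starRingEnd ℂ z +
        -(ε : ℂ) * z * (-(ε : ℂ) * starRingEnd ℂ z) * (b : ℂ)
        = (z * starRingEnd ℂ z) * (((ε * ε * b - 2 * ε : ℝ)) : ℂ) := by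
      push_cast; ring
    rw [step, hm]
    push_cast; ring
  rw [hexp] at h1
  have h2 : 0 ≤ Complex.normSq z * (ε * ε * b - 2 * ε) := by
    exact_mod_cast h1
  have h3 : (0:ℝ) < 2 * ε - ε * ε * b := by nlinarith
  nlinarith [mul_pos hN h3, h2]
end

section
/- Let (π̃₁,…,π̃_m, Ṽ, H̃) and (π̂₁,…,π̂_m, V̂, Ĥ) be two minimal Stinespring dilations of the same symmetric invariant completely positive k-linear map φ : A^k → B(H), where minimality means H̃ = closed span of {π̃₁(a₁)⋯π̃_m(a_m) Ṽ h : a_p ∈ A, h ∈ H}, and similarly for Ĥ. Then there is a unitary U : H̃ → Ĥ with U Ṽ = V̂ and U π̃₁(a₁)⋯π̃_m(a_m) = π̂₁(a₁)⋯π̂_m(a_m) U for all a₁,…,a_m ∈ A. -/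
open scoped ComplexOrder

variable {A : Type*} [Ring A] [StarRing A] [Algebra ℂ A] [StarModule ℂ A]
variable {H : Type*} [NormedAddCommGroup H] [InnerProductSpace ℂ H] [CompleteSpace H]
variable {r : ℕ}

variable {K : Type*} [NormedAddCommGroup K] [InnerProductSpace ℂ K] [CompleteSpace K]

/-- `π : p ↦ π_p` is a commuting family of unital `*`-homomorphisms `A → B(K)`. -/
def IsRepFamily (π : Fin (r + 1) → A → (K →L[ℂ] K)) : Prop :=
  (∀ p, π p 1 = 1) ∧
  (∀ p a b, π p (a * b) = π p a * π p b) ∧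
  (∀ p a b, π p (a + b) = π p a + π p b) ∧
  (∀ (p) (c : ℂ) (a), π p (c • a) = c • π p a) ∧
  (∀ p a, π p (star a) = star (π p a)) ∧
  (∀ p q a b, p ≠ q → Commute (π p a) (π q b))

/-- The product `π₁(a₁)π₂(a₂)⋯π_m(a_m)` (slots indexed by `Fin (r+1)`, `m = r+1`). -/
noncomputable def dilProd (π : Fin (r + 1) → A → (K →L[ℂ] K)) (a : Fin (r + 1) → A) :
    K →L[ℂ] K :=
  (List.ofFn fun p => π p (a p)).prod

/-- The operator `π₁(a_m)π₂(a_{m−1}a_{m+1})⋯π_m(a₁a_{2m−1})`, where the `(2m−1)`-tuple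
`(a₁,…,a_{2m−1})` is encoded as `x = (a₁,…,a_{m−1})`, `y = a_m`, `z = (a_{m+1},…,a_{2m−1})`. -/
noncomputable def dilOp (π : Fin (r + 1) → A → (K →L[ℂ] K))
    (x : Fin r → A) (y : A) (z : Fin r → A) : K →L[ℂ] K :=
  π 0 y * (List.ofFn fun i : Fin r => π i.succ (x i.rev * z i)).prod

/-- `(π, V, K)` is a Stinespring dilation of the `(2m−1)`-linear map `φ`:  `V` is a
contraction and `φ(a₁,…,a_{2m−1}) = V* π₁(a_m)π₂(a_{m−1}a_{m+1})⋯π_m(a₁a_{2m−1}) V`. -/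
def IsDilation (φ : (Fin r → A) → A → (Fin r → A) → (H →L[ℂ] H))
    (π : Fin (r + 1) → A → (K →L[ℂ] K)) (V : H →L[ℂ] K) : Prop :=
  ‖V‖ ≤ 1 ∧ ∀ x y z, φ x y z = ContinuousLinearMap.adjoint V ∘L (dilOp π x y z ∘L V)

/-- Minimality: `K` is the closed span of `{π₁(a₁)⋯π_m(a_m) V h}`. -/
def IsMinimalDil (π : Fin (r + 1) → A → (K →L[ℂ] K)) (V : H →L[ℂ] K) : Prop :=
  (Submodule.span ℂ
    {ξ : K | ∃ (a : Fin (r + 1) → A) (h : H), ξ = dilProd π a (V h)}).topologicalClosure = ⊤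

/-- `T` lies in the commutant `⋂_p π_p(A)′`. -/
def InCommutant (π : Fin (r + 1) → A → (K →L[ℂ] K)) (T : K →L[ℂ] K) : Prop :=
  ∀ (p : Fin (r + 1)) (a : A), Commute T (π p a)

/-- The map `φ_T(a₁,…,a_{2m−1}) = V* T π₁(a_m)π₂(a_{m−1}a_{m+1})⋯π_m(a₁a_{2m−1}) V`. -/
noncomputable def phiT (π : Fin (r + 1) → A → (K →L[ℂ] K)) (V : H →L[ℂ] K)
    (T : K →L[ℂ] K) (x : Fin r → A) (y : A) (z : Fin r → A) : H →L[ℂ] H :=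
  ContinuousLinearMap.adjoint V ∘L ((T ∘L dilOp π x y z) ∘L V)


section ListAux
variable {M : Type*} [Monoid M]

theorem my_ofFn_prod_mul_prod : ∀ {n : ℕ} (f g : Fin n → M),
    (∀ p q, p ≠ q → Commute (f p) (g q)) →
    (List.ofFn f).prod * (List.ofFn g).prod = (List.ofFn fun p => f p * g p).prod := by
  intro n
  induction n with
  | zero => intro f g _; simp
  | succ n ih =>
    intro f g hc
    have h0 : Commute ((List.ofFn fun i : Fin n => f i.succ).prod) (g 0) := by
      apply Commute.list_prod_left
      intro x hx
      rw [List.mem_ofFn] at hx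
      obtain ⟨i, rfl⟩ := hx
      exact hc i.succ 0 (Fin.succ_ne_zero i)
    rw [List.ofFn_succ, List.ofFn_succ, List.ofFn_succ, List.prod_cons, List.prod_cons,
      List.prod_cons,
      ← ih (fun i => f i.succ) (fun i => g i.succ)
        (fun p q hpq => hc p.succ q.succ (fun h => hpq (Fin.succ_injective _ h)))]
    rw [mul_assoc, ← mul_assoc (List.ofFn fun i => f i.succ).prod, h0.eq]
    simp only [mul_assoc]

theorem my_star_ofFn_prod {M : Type*} [Monoid M] [StarMul M] :
    ∀ {n : ℕ} (f : Fin n → M), (∀ p q, p ≠ q → Commute (f p) (f q)) →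
    star (List.ofFn f).prod = (List.ofFn fun p => star (f p)).prod := by
  intro n
  induction n with
  | zero => intro f _; simp
  | succ n ih =>
    intro f hc
    have h0 : Commute ((List.ofFn fun i : Fin n => star (f i.succ)).prod) (star (f 0)) := by
      apply Commute.list_prod_left
      intro x hx
      rw [List.mem_ofFn] at hx
      obtain ⟨i, rfl⟩ := hx
      exact (hc i.succ 0 (Fin.succ_ne_zero i)).star_star
    rw [List.ofFn_succ, List.ofFn_succ, List.prod_cons, List.prod_cons, star_mul,
      ih (fun i => f i.succ)
        (fun p q hpq => hc p.succ q.succ (fun h => hpq (Fin.succ_injective _ h))),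
      h0.eq]

end ListAux

section DilAux

variable {A : Type*} [Ring A] [StarRing A] [Algebra ℂ A] [StarModule ℂ A]
variable {H : Type*} [NormedAddCommGroup H] [InnerProductSpace ℂ H] [CompleteSpace H]
variable {r : ℕ}
variable {K : Type*} [NormedAddCommGroup K] [InnerProductSpace ℂ K] [CompleteSpace K]
variable {π : Fin (r + 1) → A → (K →L[ℂ] K)} {V : H →L[ℂ] K}

theorem dilProd_mul (hrep : IsRepFamily π) (a b : Fin (r + 1) → A) :
    dilProd π a * dilProd π b = dilProd π fun p => a p * b p := by
  unfold dilProd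
  rw [my_ofFn_prod_mul_prod _ _ (fun p q hpq => hrep.2.2.2.2.2 p q _ _ hpq)]
  exact congrArg List.prod (congrArg List.ofFn (funext fun p => (hrep.2.1 p (a p) (b p)).symm))

theorem star_dilProd (hrep : IsRepFamily π) (a : Fin (r + 1) → A) :
    star (dilProd π a) = dilProd π fun p => star (a p) := by
  unfold dilProd
  rw [my_star_ofFn_prod _ (fun p q hpq => hrep.2.2.2.2.2 p q _ _ hpq)]
  exact congrArg List.prod (congrArg List.ofFn (funext fun p => (hrep.2.2.2.2.1 p (a p)).symm))

theorem dilProd_one (hrep : IsRepFamily π) : dilProd π (fun _ => (1 : A)) = 1 := by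
  unfold dilProd
  apply List.prod_eq_one
  intro x hx
  rw [List.mem_ofFn] at hx
  obtain ⟨i, rfl⟩ := hx
  exact hrep.1 i

theorem adj_dilProd_comp (hrep : IsRepFamily π) (a b : Fin (r + 1) → A) :
    ContinuousLinearMap.adjoint (dilProd π a) ∘L dilProd π b =
      dilOp π (fun i => star (a i.rev.succ)) (star (a 0) * b 0) (fun i => b i.succ) := by
  have h1 : ContinuousLinearMap.adjoint (dilProd π a) ∘L dilProd π b
      = dilProd π fun p => star (a p) * b p := by
    rw [← ContinuousLinearMap.star_eq_adjoint]
    show star (dilProd π a) * dilProd π b = _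
    rw [star_dilProd hrep, dilProd_mul hrep]
  rw [h1]
  unfold dilProd dilOp
  rw [List.ofFn_succ, List.prod_cons]
  refine congrArg _ (congrArg List.prod (congrArg List.ofFn (funext fun i => ?_)))
  simp only [Fin.rev_rev]

theorem inner_dilProd_dilProd {φ : (Fin r → A) → A → (Fin r → A) → (H →L[ℂ] H)}
    (hrep : IsRepFamily π) (hdil : IsDilation φ π V)
    (a : Fin (r + 1) → A) (g : H) (b : Fin (r + 1) → A) (h : H) :
    (inner ℂ (dilProd π a (V g)) (dilProd π b (V h)) : ℂ) = gram φ b h a g := by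
  rw [← ContinuousLinearMap.adjoint_inner_right (dilProd π a) (V g) (dilProd π b (V h))]
  have h1 : ContinuousLinearMap.adjoint (dilProd π a) (dilProd π b (V h)) =
      dilOp π (fun i => star (a i.rev.succ)) (star (a 0) * b 0) (fun i => b i.succ) (V h) := by
    rw [← ContinuousLinearMap.comp_apply, adj_dilProd_comp hrep]
  rw [h1, ← ContinuousLinearMap.adjoint_inner_right V g _]
  have h2 := hdil.2 (fun i => star (a i.rev.succ)) (star (a 0) * b 0) (fun i => b i.succ)
  unfold gram
  rw [h2]
  rfl

end DilAux

/-- Uniqueness of minimal Stinespring dilations: if `(π̃, Ṽ, K₁)` and `(π̂, V̂, K₂)` are two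
minimal Stinespring dilations of the same symmetric invariant completely positive
`(2m−1)`-linear map `φ`, then there is a unitary `U : K₁ → K₂` with `U Ṽ = V̂` and
`U π̃₁(a₁)⋯π̃_m(a_m) = π̂₁(a₁)⋯π̂_m(a_m) U`. -/
theorem stmt10 (φ : (Fin r → A) → A → (Fin r → A) → (H →L[ℂ] H))
    (hlin : IsMultilinearOdd φ) (hsymm : IsSymmMapOdd φ)
    (hinv : IsInvariantOdd φ) (hcp : IsCPOdd φ)
    {K₁ K₂ : Type*} [NormedAddCommGroup K₁] [InnerProductSpace ℂ K₁] [CompleteSpace K₁]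
    [NormedAddCommGroup K₂] [InnerProductSpace ℂ K₂] [CompleteSpace K₂]
    (π₁ : Fin (r + 1) → A → (K₁ →L[ℂ] K₁)) (V₁ : H →L[ℂ] K₁)
    (π₂ : Fin (r + 1) → A → (K₂ →L[ℂ] K₂)) (V₂ : H →L[ℂ] K₂)
    (hrep₁ : IsRepFamily π₁) (hdil₁ : IsDilation φ π₁ V₁) (hmin₁ : IsMinimalDil π₁ V₁)
    (hrep₂ : IsRepFamily π₂) (hdil₂ : IsDilation φ π₂ V₂) (hmin₂ : IsMinimalDil π₂ V₂) :
    ∃ U : K₁ ≃ₗᵢ[ℂ] K₂,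
      (∀ h : H, U (V₁ h) = V₂ h) ∧
      (∀ (a : Fin (r + 1) → A) (ξ : K₁), U (dilProd π₁ a ξ) = dilProd π₂ a (U ξ)) := by
  classical
  -- index type for elementary vectors
  let F := (Fin (r + 1) → A) × H
  let f₁ : F → K₁ := fun x => dilProd π₁ x.1 (V₁ x.2)
  let f₂ : F → K₂ := fun x => dilProd π₂ x.1 (V₂ x.2)
  have hinner : ∀ x y : F, (inner ℂ (f₁ x) (f₁ y) : ℂ) = inner ℂ (f₂ x) (f₂ y) := by
    intro x y
    rw [show f₁ x = dilProd π₁ x.1 (V₁ x.2) from rfl, show f₁ y = dilProd π₁ y.1 (V₁ y.2) from rfl,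
      show f₂ x = dilProd π₂ x.1 (V₂ x.2) from rfl, show f₂ y = dilProd π₂ y.1 (V₂ y.2) from rfl,
      inner_dilProd_dilProd hrep₁ hdil₁, inner_dilProd_dilProd hrep₂ hdil₂]
  let T₁ : (F →₀ ℂ) →ₗ[ℂ] K₁ := Finsupp.linearCombination ℂ f₁
  let T₂ : (F →₀ ℂ) →ₗ[ℂ] K₂ := Finsupp.linearCombination ℂ f₂
  have hTinner : ∀ c d : F →₀ ℂ, (inner ℂ (T₁ c) (T₁ d) : ℂ) = inner ℂ (T₂ c) (T₂ d) := by
    intro c d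
    rw [show T₁ c = c.sum fun x r => r • f₁ x from Finsupp.linearCombination_apply ℂ c,
      show T₁ d = d.sum fun x r => r • f₁ x from Finsupp.linearCombination_apply ℂ d,
      show T₂ c = c.sum fun x r => r • f₂ x from Finsupp.linearCombination_apply ℂ c,
      show T₂ d = d.sum fun x r => r • f₂ x from Finsupp.linearCombination_apply ℂ d]
    rw [Finsupp.sum, Finsupp.sum, Finsupp.sum, Finsupp.sum, sum_inner, sum_inner]
    refine Finset.sum_congr rfl fun i _ => ?_
    rw [inner_sum, inner_sum]
    refine Finset.sum_congr rfl fun j _ => ?_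
    rw [inner_smul_left, inner_smul_left, inner_smul_right, inner_smul_right, hinner]
  have hnorm : ∀ c : F →₀ ℂ, ‖T₁ c‖ = ‖T₂ c‖ := by
    intro c
    have h1 : (‖T₁ c‖ : ℝ) ^ 2 = ‖T₂ c‖ ^ 2 := by
      rw [← @inner_self_eq_norm_sq ℂ, ← @inner_self_eq_norm_sq ℂ, hTinner]
    calc ‖T₁ c‖ = √(‖T₁ c‖ ^ 2) := (Real.sqrt_sq (norm_nonneg _)).symm
      _ = √(‖T₂ c‖ ^ 2) := by rw [h1]
      _ = ‖T₂ c‖ := Real.sqrt_sq (norm_nonneg _)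
  have hker : LinearMap.ker T₁ ≤ LinearMap.ker T₂ := by
    intro c hc
    rw [LinearMap.mem_ker] at hc ⊢
    rw [← norm_eq_zero, ← hnorm, norm_eq_zero]
    exact hc
  -- the densely defined unitary
  let U₀ : LinearMap.range T₁ →ₗ[ℂ] K₂ :=
    ((LinearMap.ker T₁).liftQ T₂ hker) ∘ₗ (LinearMap.quotKerEquivRange T₁).symm.toLinearMap
  have hU₀ : ∀ c : F →₀ ℂ, U₀ ⟨T₁ c, LinearMap.mem_range_self T₁ c⟩ = T₂ c := by
    intro c
    have h1 : (LinearMap.quotKerEquivRange T₁).symm ⟨T₁ c, LinearMap.mem_range_self T₁ c⟩ =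
        Submodule.Quotient.mk c :=
      LinearMap.quotKerEquivRange_symm_apply_image T₁ c (LinearMap.mem_range_self T₁ c)
    show ((LinearMap.ker T₁).liftQ T₂ hker)
        ((LinearMap.quotKerEquivRange T₁).symm ⟨T₁ c, LinearMap.mem_range_self T₁ c⟩) = T₂ c
    rw [h1, Submodule.liftQ_apply]
  have hU₀norm : ∀ ξ : LinearMap.range T₁, ‖U₀ ξ‖ = ‖ξ‖ := by
    rintro ⟨ξ, hξ⟩
    obtain ⟨c, rfl⟩ := hξ
    rw [hU₀ c]
    exact (hnorm c).symm
  -- density of the ranges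
  have hset₁ : Set.range f₁ = {ξ : K₁ | ∃ a h, ξ = dilProd π₁ a (V₁ h)} := by
    ext ξ
    constructor
    · rintro ⟨x, rfl⟩; exact ⟨x.1, x.2, rfl⟩
    · rintro ⟨a, h, rfl⟩; exact ⟨(a, h), rfl⟩
  have hset₂ : Set.range f₂ = {ξ : K₂ | ∃ a h, ξ = dilProd π₂ a (V₂ h)} := by
    ext ξ
    constructor
    · rintro ⟨x, rfl⟩; exact ⟨x.1, x.2, rfl⟩
    · rintro ⟨a, h, rfl⟩; exact ⟨(a, h), rfl⟩
  have hspan₁ : LinearMap.range T₁ =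
      Submodule.span ℂ {ξ : K₁ | ∃ a h, ξ = dilProd π₁ a (V₁ h)} := by
    rw [show LinearMap.range T₁ = Submodule.span ℂ (Set.range f₁) from
      Finsupp.range_linearCombination ℂ, hset₁]
  have hspan₂ : LinearMap.range T₂ =
      Submodule.span ℂ {ξ : K₂ | ∃ a h, ξ = dilProd π₂ a (V₂ h)} := by
    rw [show LinearMap.range T₂ = Submodule.span ℂ (Set.range f₂) from
      Finsupp.range_linearCombination ℂ, hset₂]
  have hdense₁ : Dense ((LinearMap.range T₁ : Submodule ℂ K₁) : Set K₁) := by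
    rw [Submodule.dense_iff_topologicalClosure_eq_top, hspan₁]
    exact hmin₁
  have hdense₂ : Dense ((LinearMap.range T₂ : Submodule ℂ K₂) : Set K₂) := by
    rw [Submodule.dense_iff_topologicalClosure_eq_top, hspan₂]
    exact hmin₂
  -- extend to the whole space
  let e : (LinearMap.range T₁ : Submodule ℂ K₁) →L[ℂ] K₁ := (LinearMap.range T₁).subtypeL
  have he_dense : DenseRange e := by
    have : Set.range e = ((LinearMap.range T₁ : Submodule ℂ K₁) : Set K₁) := Subtype.range_coe
    rw [DenseRange, this]
    exact hdense₁
  have he_ui : IsUniformInducing e := isometry_subtype_coe.isUniformInducing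
  let U₁ : (LinearMap.range T₁ : Submodule ℂ K₁) →ₗᵢ[ℂ] K₂ := ⟨U₀, hU₀norm⟩
  let Ucl : K₁ →L[ℂ] K₂ := U₁.toContinuousLinearMap.extend e
  have hUcl : ∀ ξ : LinearMap.range T₁, Ucl ξ = U₀ ξ := fun ξ =>
    ContinuousLinearMap.extend_eq _ he_dense he_ui ξ
  have hUclT : ∀ c : F →₀ ℂ, Ucl (T₁ c) = T₂ c := by
    intro c
    have h1 := hUcl ⟨T₁ c, LinearMap.mem_range_self T₁ c⟩
    rw [hU₀ c] at h1
    exact h1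
  have hUcl_norm : ∀ ξ : K₁, ‖Ucl ξ‖ = ‖ξ‖ := by
    have hclosed : IsClosed {ξ : K₁ | ‖Ucl ξ‖ = ‖ξ‖} :=
      isClosed_eq (continuous_norm.comp Ucl.continuous) continuous_norm
    have hsub : ((LinearMap.range T₁ : Submodule ℂ K₁) : Set K₁) ⊆ {ξ : K₁ | ‖Ucl ξ‖ = ‖ξ‖} := by
      rintro _ ⟨c, rfl⟩
      show ‖Ucl (T₁ c)‖ = ‖T₁ c‖
      rw [hUclT c, hnorm c]
    intro ξ
    exact hclosed.closure_subset_iff.mpr hsub (hdense₁ ξ)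
  let Uli : K₁ →ₗᵢ[ℂ] K₂ := ⟨Ucl.toLinearMap, hUcl_norm⟩
  have hsurj : Function.Surjective Uli := by
    have hclosed : IsClosed (Set.range Uli) := Uli.isometry.isClosedEmbedding.isClosed_range
    have hsub : ((LinearMap.range T₂ : Submodule ℂ K₂) : Set K₂) ⊆ Set.range Uli := by
      rintro _ ⟨c, rfl⟩
      exact ⟨T₁ c, hUclT c⟩
    intro η
    exact hclosed.closure_subset_iff.mpr hsub (hdense₂ η)
  refine ⟨LinearIsometryEquiv.ofSurjective Uli hsurj, ?_, ?_⟩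
  · -- U V₁ = V₂
    intro h
    have hUapp : ∀ ξ : K₁, LinearIsometryEquiv.ofSurjective Uli hsurj ξ = Ucl ξ := fun ξ => by
      rw [LinearIsometryEquiv.coe_ofSurjective]; rfl
    have h1 : V₁ h = T₁ (Finsupp.single ((fun _ => (1 : A)), h) 1) := by
      rw [show T₁ (Finsupp.single ((fun _ => (1 : A)), h) 1) = (1 : ℂ) • f₁ ((fun _ => 1), h) from
        Finsupp.linearCombination_single ℂ _ _, one_smul]
      show V₁ h = dilProd π₁ (fun _ => 1) (V₁ h)
      rw [dilProd_one hrep₁, ContinuousLinearMap.one_apply]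
    rw [hUapp, h1, hUclT]
    rw [show T₂ (Finsupp.single ((fun _ => (1 : A)), h) 1) = (1 : ℂ) • f₂ ((fun _ => 1), h) from
      Finsupp.linearCombination_single ℂ _ _, one_smul]
    show dilProd π₂ (fun _ => 1) (V₂ h) = V₂ h
    rw [dilProd_one hrep₂, ContinuousLinearMap.one_apply]
  · -- intertwining
    intro a ξ
    have hUapp : ∀ ξ : K₁, LinearIsometryEquiv.ofSurjective Uli hsurj ξ = Ucl ξ := fun ξ => by
      rw [LinearIsometryEquiv.coe_ofSurjective]; rfl
    rw [hUapp, hUapp]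
    show (Ucl ∘L dilProd π₁ a) ξ = ((dilProd π₂ a ∘L Ucl : K₁ →L[ℂ] K₂)) ξ
    have hf : ∀ x : F, Ucl (f₁ x) = f₂ x := by
      intro x
      have h1 : f₁ x = T₁ (Finsupp.single x 1) := by
        rw [show T₁ (Finsupp.single x 1) = (1 : ℂ) • f₁ x from
          Finsupp.linearCombination_single ℂ _ _, one_smul]
      rw [h1, hUclT]
      rw [show T₂ (Finsupp.single x 1) = (1 : ℂ) • f₂ x from
        Finsupp.linearCombination_single ℂ _ _, one_smul]
    have hEqOn : Set.EqOn (Ucl ∘L dilProd π₁ a) (dilProd π₂ a ∘L Ucl)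
        {ξ : K₁ | ∃ b h, ξ = dilProd π₁ b (V₁ h)} := by
      rintro _ ⟨b, h, rfl⟩
      show Ucl (dilProd π₁ a (dilProd π₁ b (V₁ h))) = dilProd π₂ a (Ucl (dilProd π₁ b (V₁ h)))
      have e1 : dilProd π₁ a (dilProd π₁ b (V₁ h)) = f₁ ((fun p => a p * b p), h) := by
        show dilProd π₁ a (dilProd π₁ b (V₁ h)) = dilProd π₁ (fun p => a p * b p) (V₁ h)
        rw [← dilProd_mul hrep₁]
        rfl
      have e2 : Ucl (dilProd π₁ b (V₁ h)) = f₂ (b, h) := hf (b, h)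
      rw [e1, hf, e2]
      show dilProd π₂ (fun p => a p * b p) (V₂ h) = dilProd π₂ a (dilProd π₂ b (V₂ h))
      rw [← dilProd_mul hrep₂]
      rfl
    have hEqOnSpan : Set.EqOn (Ucl ∘L dilProd π₁ a) (dilProd π₂ a ∘L Ucl)
        ((Submodule.span ℂ {ξ : K₁ | ∃ b h, ξ = dilProd π₁ b (V₁ h)} : Submodule ℂ K₁) :
          Set K₁) :=
      fun _ hx => LinearMap.eqOn_span' hEqOn hx
    have hdense : Dense ((Submodule.span ℂ
        {ξ : K₁ | ∃ b h, ξ = dilProd π₁ b (V₁ h)} : Submodule ℂ K₁) : Set K₁) := by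
      rw [Submodule.dense_iff_topologicalClosure_eq_top]
      exact hmin₁
    have hfin : ⇑(Ucl ∘L dilProd π₁ a) = ⇑(dilProd π₂ a ∘L Ucl) :=
      Continuous.ext_on hdense (Ucl ∘L dilProd π₁ a).continuous
        (dilProd π₂ a ∘L Ucl).continuous hEqOnSpan
    exact congrFun hfin ξ
end

section
/- Let (π₁,…,π_m, V, K) be a minimal Stinespring dilation of a symmetric invariant completely positive (2m−1)-linear map φ : A^{2m−1} → B(H). For T in the commutant ⋂_{p=1}^m π_p(A)′ ⊆ B(K), define φ_T(a₁,…,a_{2m−1}) = V* T π₁(a_m) π₂(a_{m−1}a_{m+1}) ⋯ π_m(a₁a_{2m−1}) V. Then the map T ↦ φ_T is linear and injective. -/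
open scoped ComplexOrder

variable {A : Type*} [Ring A] [StarRing A] [Algebra ℂ A] [StarModule ℂ A]
variable {H : Type*} [NormedAddCommGroup H] [InnerProductSpace ℂ H] [CompleteSpace H]
variable {r : ℕ}

variable {K : Type*} [NormedAddCommGroup K] [InnerProductSpace ℂ K] [CompleteSpace K]

lemma commute_star_star_aux {M : Type*} [Monoid M] [StarMul M] {x y : M}
    (h : Commute x y) : Commute (star x) (star y) := by
  have := congrArg star h.eq
  simp only [star_mul] at this
  exact this.symm

lemma key_prod {n : ℕ} (ρ : Fin n → A → (K →L[ℂ] K))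
    (hmul : ∀ p a b, ρ p (a * b) = ρ p a * ρ p b)
    (hstar : ∀ p a, ρ p (star a) = star (ρ p a))
    (hcomm : ∀ p q a b, p ≠ q → Commute (ρ p a) (ρ q b))
    (a b : Fin n → A) :
    star ((List.ofFn fun p => ρ p (b p)).prod) * (List.ofFn fun p => ρ p (a p)).prod
      = (List.ofFn fun p => ρ p (star (b p) * a p)).prod := by
  induction n with
  | zero => simp
  | succ n ih =>
    rw [List.ofFn_succ, List.ofFn_succ, List.ofFn_succ, List.prod_cons, List.prod_cons,
      List.prod_cons]
    set Rb := (List.ofFn fun i : Fin n => ρ i.succ (b i.succ)).prod with hRb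
    set Ra := (List.ofFn fun i : Fin n => ρ i.succ (a i.succ)).prod with hRa
    have hc : ∀ c : A, Commute (ρ 0 c) Rb := by
      intro c
      refine Commute.list_prod_right _ _ ?_
      intro x hx
      obtain ⟨i, rfl⟩ := List.mem_ofFn.mp hx
      exact hcomm 0 i.succ _ _ (Fin.succ_ne_zero i).symm
    have hc' : ∀ c : A, Commute (ρ 0 c) (star Rb) := by
      intro c
      have h1 := commute_star_star_aux (hc (star c))
      rwa [← hstar, star_star] at h1
    have hih := ih (fun i => ρ i.succ) (fun p a b => hmul _ a b) (fun p a => hstar _ a)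
      (fun p q a b hpq => hcomm p.succ q.succ a b (by simpa using hpq))
      (fun i => a i.succ) (fun i => b i.succ)
    calc star (ρ 0 (b 0) * Rb) * (ρ 0 (a 0) * Ra)
        = star Rb * (ρ 0 (star (b 0)) * (ρ 0 (a 0) * Ra)) := by
          rw [star_mul, hstar]; rw [mul_assoc]
      _ = star Rb * (ρ 0 (star (b 0) * a 0) * Ra) := by rw [hmul, mul_assoc]
      _ = ρ 0 (star (b 0) * a 0) * (star Rb * Ra) := by
          rw [← mul_assoc, ← (hc' (star (b 0) * a 0)).eq, mul_assoc]
      _ = ρ 0 (star (b 0) * a 0)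
            * (List.ofFn fun i : Fin n => ρ i.succ (star (b i.succ) * a i.succ)).prod := by
          rw [hRb, hRa, hih]

lemma dilOp_as_dilProd (π : Fin (r + 1) → A → (K →L[ℂ] K)) (a b : Fin (r + 1) → A) :
    dilOp π (fun j => star (b j.rev.succ)) (star (b 0) * a 0) (fun i => a i.succ)
      = dilProd π (fun p => star (b p) * a p) := by
  unfold dilOp dilProd
  rw [List.ofFn_succ, List.prod_cons]
  congr 2
  exact congrArg List.ofFn (funext fun i => by simp [Fin.rev_rev])

lemma inner_phiT_eq (π : Fin (r + 1) → A → (K →L[ℂ] K)) (V : H →L[ℂ] K)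
    (hrep : IsRepFamily π) (T : K →L[ℂ] K) (hT : InCommutant π T)
    (a b : Fin (r + 1) → A) (g h : H) :
    (inner ℂ (dilProd π b (V g)) (T (dilProd π a (V h))) : ℂ)
      = inner ℂ g (phiT π V T (fun j => star (b j.rev.succ)) (star (b 0) * a 0)
          (fun i => a i.succ) h) := by
  obtain ⟨hone, hmul, hadd, hsmul, hstar, hcomm⟩ := hrep
  -- T and star T commute with every dilProd
  have hTs : ∀ c : Fin (r + 1) → A, Commute (star T) (dilProd π c) := by
    intro c
    refine Commute.list_prod_right _ _ ?_
    intro x hx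
    obtain ⟨i, rfl⟩ := List.mem_ofFn.mp hx
    have h1 := commute_star_star_aux (hT i (star (c i)))
    rwa [hstar, star_star] at h1
  have hTc : ∀ c : Fin (r + 1) → A, Commute T (star (dilProd π c)) := by
    intro c
    have h1 := commute_star_star_aux (hTs c)
    rwa [star_star] at h1
  have hkey := key_prod π hmul hstar hcomm a b
  have hBadj : ContinuousLinearMap.adjoint (dilProd π b) = star (dilProd π b) :=
    (ContinuousLinearMap.star_eq_adjoint _).symm
  calc (inner ℂ (dilProd π b (V g)) (T (dilProd π a (V h))) : ℂ)
      = inner ℂ (V g) (ContinuousLinearMap.adjoint (dilProd π b) (T (dilProd π a (V h)))) := by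
        rw [ContinuousLinearMap.adjoint_inner_right]
    _ = inner ℂ (V g) ((star (dilProd π b) * T * dilProd π a) (V h)) := by rw [hBadj]; rfl
    _ = inner ℂ (V g) ((T * (star (dilProd π b) * dilProd π a)) (V h)) := by
        rw [← mul_assoc, (hTc b).eq]
    _ = inner ℂ (V g) (T (dilProd π (fun p => star (b p) * a p) (V h))) := by
        rw [show star (dilProd π b) * dilProd π a
            = dilProd π (fun p => star (b p) * a p) from hkey]
        rfl
    _ = inner ℂ g (phiT π V T (fun j => star (b j.rev.succ)) (star (b 0) * a 0)
          (fun i => a i.succ) h) := by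
        rw [phiT, ContinuousLinearMap.comp_apply, ContinuousLinearMap.adjoint_inner_right,
          ContinuousLinearMap.comp_apply, ContinuousLinearMap.comp_apply,
          dilOp_as_dilProd π a b]

lemma vanish_of_dense (s : Set K) (hs : (Submodule.span ℂ s).topologicalClosure = ⊤)
    {E : Type*} [NormedAddCommGroup E] [NormedSpace ℂ E]
    (f : K →L[ℂ] E) (hf : ∀ x ∈ s, f x = 0) : f = 0 := by
  have hd : Dense (Submodule.span ℂ s : Set K) := by
    rw [dense_iff_closure_eq, ← Submodule.topologicalClosure_coe, hs]
    rfl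
  exact ContinuousLinearMap.ext_on hd fun x hx => hf x hx

/-- For a minimal Stinespring dilation `(π, V, K)` of a symmetric invariant completely
positive `(2m−1)`-linear map `φ`, the assignment `T ↦ φ_T` (with
`φ_T(a₁,…,a_{2m−1}) = V* T π₁(a_m)π₂(a_{m−1}a_{m+1})⋯π_m(a₁a_{2m−1}) V`) is linear and,
on the commutant `⋂_p π_p(A)′`, injective. -/
theorem stmt12 (φ : (Fin r → A) → A → (Fin r → A) → (H →L[ℂ] H))
    (hlin : IsMultilinearOdd φ) (hsymm : IsSymmMapOdd φ)
    (hinv : IsInvariantOdd φ) (hcp : IsCPOdd φ)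
    (π : Fin (r + 1) → A → (K →L[ℂ] K)) (V : H →L[ℂ] K)
    (hrep : IsRepFamily π) (hdil : IsDilation φ π V) (hmin : IsMinimalDil π V) :
    (∀ (T₁ T₂ : K →L[ℂ] K) (c : ℂ) (x : Fin r → A) (y : A) (z : Fin r → A),
        phiT π V (T₁ + c • T₂) x y z = phiT π V T₁ x y z + c • phiT π V T₂ x y z) ∧
    (∀ T₁ T₂ : K →L[ℂ] K, InCommutant π T₁ → InCommutant π T₂ →
        (∀ (x : Fin r → A) (y : A) (z : Fin r → A),
          phiT π V T₁ x y z = phiT π V T₂ x y z) → T₁ = T₂) := by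
  constructor
  · intro T₁ T₂ c x y z
    ext h
    simp [phiT, ContinuousLinearMap.add_comp, ContinuousLinearMap.comp_add,
      ContinuousLinearMap.smul_comp, ContinuousLinearMap.comp_smul]
  · intro T₁ T₂ h1 h2 heq
    set s : Set K := {ξ : K | ∃ (a : Fin (r + 1) → A) (h : H), ξ = dilProd π a (V h)} with hsdef
    have hmin' : (Submodule.span ℂ s).topologicalClosure = ⊤ := hmin
    set S : K →L[ℂ] K := T₁ - T₂ with hSdef
    have h0 : ∀ (a b : Fin (r + 1) → A) (g h : H),
        (inner ℂ (dilProd π b (V g)) (S (dilProd π a (V h))) : ℂ) = 0 := by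
      intro a b g h
      have e1 := inner_phiT_eq π V hrep T₁ h1 a b g h
      have e2 := inner_phiT_eq π V hrep T₂ h2 a b g h
      have hS : S (dilProd π a (V h))
          = T₁ (dilProd π a (V h)) - T₂ (dilProd π a (V h)) := rfl
      rw [hS, inner_sub_right, e1, e2, heq, sub_self]
    have step1 : ∀ ξ ∈ s, S ξ = 0 := by
      rintro ξ ⟨a, h, rfl⟩
      have hf : ∀ w ∈ s, (innerSL ℂ (S (dilProd π a (V h)))) w = 0 := by
        rintro w ⟨b, g, rfl⟩
        have := h0 a b g h
        simp only [innerSL_apply_apply]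
        rw [← inner_conj_symm, this, map_zero]
      have := vanish_of_dense s hmin' _ hf
      have hz : (inner ℂ (S (dilProd π a (V h))) (S (dilProd π a (V h))) : ℂ) = 0 := by
        have := congrFun (congrArg DFunLike.coe this) (S (dilProd π a (V h)))
        simpa using this
      exact inner_self_eq_zero.mp hz
    have hS0 : S = 0 := vanish_of_dense s hmin' S step1
    have : T₁ - T₂ = 0 := hS0
    exact sub_eq_zero.mp this
end
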